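/- Let f : ℝⁿ → ℝⁿ, let h : ℝⁿ → ℝ be differentiable, and let γ > 0. Suppose ⟨∇h(x), f(x)⟩ ≥ −γ·h(x) for all x ∈ ℝⁿ. Then for every differentiable curve x : [0,∞) → ℝⁿ satisfying x'(t) = f(x(t)) for all t ≥ 0 and h(x(0)) ≥ 0, one has h(x(t)) ≥ h(x(0))·exp(−γ·t) ≥ 0 for all t ≥ 0. In particular, the admissible set C = {x ∈ ℝⁿ : h(x) ≥ 0} is forward invariant: every solution starting in C remains in C for all t ≥ 0. -/

import Mathlib

open RealInnerProductSpace

/-- If h is a zeroing barrier function for ẋ = f(x), i.e.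
⟨∇h(x), f(x)⟩ ≥ −γ·h(x) everywhere with γ > 0, then along every solution starting with
h(x(0)) ≥ 0 we have h(x(t)) ≥ h(x(0))·exp(−γt) ≥ 0, so C = {x : h(x) ≥ 0} is
forward invariant. -/
theorem zbf_forward_invariance (n : ℕ)
    (f : EuclideanSpace ℝ (Fin n) → EuclideanSpace ℝ (Fin n))
    (h : EuclideanSpace ℝ (Fin n) → ℝ) (hdiff : Differentiable ℝ h)
    (γ : ℝ) (hγ : 0 < γ)
    (hbarrier : ∀ x : EuclideanSpace ℝ (Fin n), ⟪gradient h x, f x⟫ ≥ -γ * h x) :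
    ∀ x : ℝ → EuclideanSpace ℝ (Fin n),
      (∀ t : ℝ, 0 ≤ t → HasDerivAt x (f (x t)) t) →
      0 ≤ h (x 0) →
      ∀ t : ℝ, 0 ≤ t →
        h (x t) ≥ h (x 0) * Real.exp (-γ * t) ∧
        h (x 0) * Real.exp (-γ * t) ≥ 0 ∧
        x t ∈ {p : EuclideanSpace ℝ (Fin n) | 0 ≤ h p} := by
  intro x hx h0 t ht
  -- derivative of h ∘ x
  have hderiv : ∀ s : ℝ, 0 ≤ s →
      HasDerivAt (fun u => h (x u)) ⟪gradient h (x s), f (x s)⟫ s := by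
    intro s hs
    have := ((hdiff (x s)).hasGradientAt.hasFDerivAt).comp_hasDerivAt s (hx s hs)
    simpa [InnerProductSpace.toDual_apply_apply, Function.comp_def] using this
  -- g u = h (x u) * exp (γ u) is monotone on [0, ∞)
  set g : ℝ → ℝ := fun u => h (x u) * Real.exp (γ * u) with hg
  have hgderiv : ∀ s : ℝ, 0 ≤ s → HasDerivAt g
      (⟪gradient h (x s), f (x s)⟫ * Real.exp (γ * s)
        + h (x s) * (γ * Real.exp (γ * s))) s := by
    intro s hs
    have he : HasDerivAt (fun u => Real.exp (γ * u)) (γ * Real.exp (γ * s)) s := by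
      simpa [mul_comm, Function.comp_def] using (Real.hasDerivAt_exp (γ * s)).comp s
        ((hasDerivAt_id s).const_mul γ)
    exact (hderiv s hs).mul he
  have hmono : MonotoneOn g (Set.Ici (0 : ℝ)) := by
    apply monotoneOn_of_deriv_nonneg (convex_Ici 0)
    · exact fun s hs => ((hgderiv s hs).continuousAt).continuousWithinAt
    · intro s hs
      rw [interior_Ici] at hs
      exact (hgderiv s hs.le).differentiableAt.differentiableWithinAt
    · intro s hs
      rw [interior_Ici] at hs
      rw [(hgderiv s hs.le).deriv]
      have h1 := hbarrier (x s)
      have h2 : Real.exp (γ * s) > 0 := Real.exp_pos _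
      nlinarith [mul_le_mul_of_nonneg_right h1 h2.le]
  have key : g 0 ≤ g t := hmono Set.self_mem_Ici ht ht
  have hg0 : g 0 = h (x 0) := by simp [hg]
  have hexp : Real.exp (γ * t) > 0 := Real.exp_pos _
  have hmain : h (x t) ≥ h (x 0) * Real.exp (-γ * t) := by
    rw [hg0] at key
    have : Real.exp (-γ * t) = (Real.exp (γ * t))⁻¹ := by
      rw [← Real.exp_neg]; ring_nf
    rw [this]
    rw [ge_iff_le, mul_inv_le_iff₀ hexp]
    simpa [hg, mul_comm] using key
  have h2 : h (x 0) * Real.exp (-γ * t) ≥ 0 :=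
    mul_nonneg h0 (Real.exp_pos _).le
  exact ⟨hmain, h2, le_trans h2 hmain⟩
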